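/- There exist a constant C > 0 and J₀ such that the following holds for every integer J ≥ J₀: if b₁, ..., b_t are positive integers all of whose prime factors are ≤ J, if 100 ≤ t ≤ J^{1/2}/log J, and if gcd(b_i, b_j) ≤ J for all i ≠ j, then there exist three pairwise distinct indices i, j, k with ω(b_i) ≤ C·J/(t·log J), ω(b_j) ≤ C·J/(t·log J), and ω(b_k) ≤ C·J/(t·log J). -/

import Mathlib

open Finset

lemma aux_two_pow {n : ℕ} (hn : n ≠ 0) : 2 ^ n.primeFactors.card ≤ n := by
  calc 2 ^ n.primeFactors.card = ∏ _p ∈ n.primeFactors, 2 := by rw [Finset.prod_const]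
    _ ≤ ∏ p ∈ n.primeFactors, p := Finset.prod_le_prod' fun p hp =>
        (Nat.prime_of_mem_primeFactors hp).two_le
    _ ≤ n := Nat.le_of_dvd (Nat.pos_of_ne_zero hn) (Nat.prod_primeFactors_dvd n)


lemma aux_nat_ineq (d : ℕ) : d ≤ 1 + (d * d - d) := by
  rcases d with _ | k
  · simp
  · have h : (k+1) * (k+1) - (k+1) = (k+1) * k := by
      have : (k+1) * (k+1) = (k+1) * k + (k+1) := by ring
      omega
    rw [h]
    nlinarith

lemma aux_bonf {t : ℕ} (A : Fin t → Finset ℕ) (P : Finset ℕ) (hA : ∀ i, A i ⊆ P) :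
    ∑ i, (A i).card ≤ P.card +
      ∑ ij ∈ (Finset.univ : Finset (Fin t)).offDiag, (A ij.1 ∩ A ij.2).card := by
  classical
  have hcard : ∀ i, (A i).card = ∑ p ∈ P, if p ∈ A i then 1 else 0 := by
    intro i
    rw [← Finset.card_filter, Finset.filter_mem_eq_inter, Finset.inter_eq_right.mpr (hA i)]
  have h1 : ∑ i, (A i).card = ∑ p ∈ P, (Finset.univ.filter (fun i => p ∈ A i)).card := by
    simp_rw [hcard]
    rw [Finset.sum_comm]
    exact Finset.sum_congr rfl fun p _ => (Finset.card_filter _ _).symm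
  have h2 : ∑ ij ∈ (Finset.univ : Finset (Fin t)).offDiag, (A ij.1 ∩ A ij.2).card
      = ∑ p ∈ P, ((Finset.univ.filter (fun i => p ∈ A i)).card *
          ((Finset.univ.filter (fun i => p ∈ A i)).card) -
          (Finset.univ.filter (fun i => p ∈ A i)).card) := by
    have hsub : ∀ ij : Fin t × Fin t, (A ij.1 ∩ A ij.2).card
        = ∑ p ∈ P, if p ∈ A ij.1 ∧ p ∈ A ij.2 then 1 else 0 := by
      intro ij
      rw [← Finset.card_filter]
      congr 1
      ext p
      simp only [Finset.mem_filter, Finset.mem_inter]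
      constructor
      · rintro ⟨h1, h2⟩; exact ⟨hA _ h1, h1, h2⟩
      · rintro ⟨_, h⟩; exact h
    simp_rw [hsub]
    rw [Finset.sum_comm]
    congr 1
    ext p
    rw [← Finset.card_filter]
    rw [← Finset.offDiag_card]
    congr 1
    ext ij
    simp [Finset.mem_offDiag]
    tauto
  rw [h1, h2, Finset.card_eq_sum_ones P, ← Finset.sum_add_distrib]
  exact Finset.sum_le_sum fun p _ => aux_nat_ineq _


lemma aux_cheby {J : ℕ} (hJ : 100 ≤ J) :
    (((Finset.range (J+1)).filter Nat.Prime).card : ℝ) ≤ 7 * J / Real.log J := by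
  classical
  set s := Nat.sqrt J with hs
  set P := (Finset.range (J+1)).filter Nat.Prime with hP
  set Q := P.filter (fun p => s < p) with hQ
  have hJ0 : (0:ℝ) < J := by positivity
  have hL1 : (1:ℝ) ≤ Real.log J := by
    rw [Real.le_log_iff_exp_le hJ0]
    calc Real.exp 1 ≤ 3 := by nlinarith [Real.exp_one_lt_d9]
      _ ≤ (J:ℝ) := by exact_mod_cast by omega
  have hL0 : (0:ℝ) < Real.log J := lt_of_lt_of_le one_pos hL1
  -- split
  have hsplit : P.card = (P.filter (fun p => ¬ s < p)).card + Q.card := by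
    rw [hQ, add_comm, Finset.card_filter_add_card_filter_not]
  have hR : (P.filter (fun p => ¬ s < p)).card ≤ s + 1 := by
    calc (P.filter (fun p => ¬ s < p)).card ≤ (Finset.range (s+1)).card :=
      Finset.card_le_card (fun p hp => by
        simp only [Finset.mem_filter, not_lt] at hp
        exact Finset.mem_range.mpr (by omega))
      _ = s + 1 := Finset.card_range _
  -- primorial bound
  have hQpow : (s+1) ^ Q.card ≤ 4 ^ J := by
    calc (s+1) ^ Q.card ≤ ∏ p ∈ Q, p := Finset.pow_card_le_prod Q _ _ (fun p hp => by
        simp only [hQ, Finset.mem_filter] at hp; omega)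
      _ ≤ ∏ p ∈ P, p := Finset.prod_le_prod_of_subset_of_one_le' (Finset.filter_subset _ _)
          (fun p hp _ => by
            simp only [hP, Finset.mem_filter] at hp
            exact hp.2.one_lt.le)
      _ = primorial J := rfl
      _ ≤ 4 ^ J := primorial_le_4_pow J
  -- sqrt facts
  have hsqlt : (J:ℝ) < ((s:ℝ)+1)^2 := by
    have := Nat.lt_succ_sqrt J
    push_cast
    exact_mod_cast by nlinarith [Nat.lt_succ_sqrt J]
  have hsqrt_lt : Real.sqrt J < (s:ℝ)+1 := by
    rw [show (s:ℝ)+1 = ((s+1:ℕ):ℝ) by push_cast; ring] at *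
    exact (Real.sqrt_lt' (by positivity)).mpr hsqlt
  have hsqrt_pos : (0:ℝ) < Real.sqrt J := Real.sqrt_pos.mpr hJ0
  have hlog_half : Real.log J / 2 ≤ Real.log ((s:ℝ)+1) := by
    rw [← Real.log_sqrt hJ0.le]
    exact Real.log_le_log hsqrt_pos hsqrt_lt.le
  -- Q.card bound
  have hlogQ : (Q.card : ℝ) * Real.log ((s:ℝ)+1) ≤ (J:ℝ) * Real.log 4 := by
    have h := hQpow
    have hcast : (((s+1) ^ Q.card : ℕ) : ℝ) ≤ (((4:ℕ) ^ J : ℕ) : ℝ) := by exact_mod_cast h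
    push_cast at hcast
    have := Real.log_le_log (by positivity) hcast
    rwa [Real.log_pow, Real.log_pow] at this
  have hlog4 : Real.log 4 ≤ 1.4 := by
    rw [show (4:ℝ) = 2^2 by norm_num, Real.log_pow]
    nlinarith [Real.log_two_lt_d9]
  have hQle : (Q.card : ℝ) ≤ 3 * J / Real.log J := by
    rw [le_div_iff₀ hL0]
    nlinarith [hlogQ, hlog_half, hlog4, Nat.cast_nonneg (α := ℝ) Q.card, hJ0]
  -- s+1 bound
  have hLsqrt : Real.log J ≤ 2 * Real.sqrt J := by
    have h1 : Real.log (Real.sqrt J) ≤ Real.sqrt J - 1 := Real.log_le_sub_one_of_pos hsqrt_pos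
    rw [Real.log_sqrt hJ0.le] at h1
    linarith
  have hsle : ((s:ℝ)+1) ≤ 4 * J / Real.log J := by
    have hs2 : ((s:ℝ)+1) ≤ 2 * Real.sqrt J := by
      have h1 : (s:ℝ) ≤ Real.sqrt J := by
        rcases Nat.eq_zero_or_pos s with h0 | h0
        · rw [h0]; simpa using Real.sqrt_nonneg (J:ℝ)
        · exact (Real.le_sqrt' (by exact_mod_cast h0)).mpr (by exact_mod_cast Nat.sqrt_le' J)
      have h2 : (1:ℝ) ≤ Real.sqrt J := by
        rw [show (1:ℝ) = Real.sqrt 1 by simp]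
        exact Real.sqrt_le_sqrt (by exact_mod_cast by omega)
      linarith
    rw [le_div_iff₀ hL0]
    have hmul : Real.sqrt J * Real.sqrt J = (J:ℝ) := Real.mul_self_sqrt hJ0.le
    nlinarith [hLsqrt, hsqrt_pos]
  -- combine
  have : (P.card : ℝ) ≤ ((s:ℝ)+1) + (Q.card : ℝ) := by
    rw [hsplit]
    push_cast
    have := hR
    exact_mod_cast by push_cast; linarith [(by exact_mod_cast hR : ((P.filter (fun p => ¬ s < p)).card:ℝ) ≤ (s:ℝ)+1)]
  calc (P.card : ℝ) ≤ ((s:ℝ)+1) + (Q.card : ℝ) := this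
    _ ≤ 4 * J / Real.log J + 3 * J / Real.log J := add_le_add hsle hQle
    _ = 7 * J / Real.log J := by ring


theorem stmt_16 :
    ∃ C > (0 : ℝ), ∃ J₀ : ℕ, ∀ J : ℕ, J₀ ≤ J →
      ∀ (t : ℕ) (b : Fin t → ℕ),
        (∀ i, 0 < b i) →
        (∀ i, ∀ p : ℕ, p.Prime → p ∣ b i → p ≤ J) →
        100 ≤ t → (t : ℝ) ≤ (J : ℝ) ^ ((1 : ℝ) / 2) / Real.log J →
        (∀ i j, i ≠ j → Nat.gcd (b i) (b j) ≤ J) →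
        ∃ i j k, i ≠ j ∧ i ≠ k ∧ j ≠ k ∧
          ((b i).primeFactors.card : ℝ) ≤ C * J / (t * Real.log J) ∧
          ((b j).primeFactors.card : ℝ) ≤ C * J / (t * Real.log J) ∧
          ((b k).primeFactors.card : ℝ) ≤ C * J / (t * Real.log J) := by
  classical
  refine ⟨100, by norm_num, 100, ?_⟩
  intro J hJ t b hbpos hbprime ht100 htle hgcd
  have hJ0 : (0:ℝ) < J := by
    have : (100:ℝ) ≤ J := by exact_mod_cast hJ
    linarith
  have hL1 : (1:ℝ) ≤ Real.log J := by
    rw [Real.le_log_iff_exp_le hJ0]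
    calc Real.exp 1 ≤ 3 := by nlinarith [Real.exp_one_lt_d9]
      _ ≤ (J:ℝ) := by exact_mod_cast by omega
  have hL0 : (0:ℝ) < Real.log J := lt_of_lt_of_le one_pos hL1
  set L : ℝ := Real.log J with hLdef
  have ht0 : (0:ℝ) < t := by exact_mod_cast by omega
  -- the prime set
  set P : Finset ℕ := (Finset.range (J+1)).filter Nat.Prime with hPdef
  have hA : ∀ i, (b i).primeFactors ⊆ P := by
    intro i p hp
    have hpp := Nat.prime_of_mem_primeFactors hp
    have hpd := Nat.dvd_of_mem_primeFactors hp
    exact Finset.mem_filter.mpr ⟨Finset.mem_range.mpr (by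
      have := hbprime i p hpp hpd; omega), hpp⟩
  -- intersection bound
  set K : ℕ := Nat.log 2 J with hKdef
  have hK : ∀ i j : Fin t, i ≠ j →
      ((b i).primeFactors ∩ (b j).primeFactors).card ≤ K := by
    intro i j hij
    have hinter : (b i).primeFactors ∩ (b j).primeFactors
        = (Nat.gcd (b i) (b j)).primeFactors :=
      (Nat.primeFactors_gcd (hbpos i).ne' (hbpos j).ne').symm
    rw [hinter]
    have hgpos : Nat.gcd (b i) (b j) ≠ 0 :=
      Nat.gcd_ne_zero_left (hbpos i).ne'
    have h2 : 2 ^ (Nat.gcd (b i) (b j)).primeFactors.card ≤ Nat.gcd (b i) (b j) :=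
      aux_two_pow hgpos
    have h3 : 2 ^ (Nat.gcd (b i) (b j)).primeFactors.card ≤ J :=
      h2.trans (hgcd i j hij)
    exact (Nat.le_log_iff_pow_le (by norm_num) (by omega)).mpr h3
  -- total sum bound (natural numbers)
  have hsumN : ∑ i, (b i).primeFactors.card ≤ P.card + t * t * K := by
    have h1 := aux_bonf (fun i => (b i).primeFactors) P hA
    have h2 : ∑ ij ∈ (Finset.univ : Finset (Fin t)).offDiag,
        ((b ij.1).primeFactors ∩ (b ij.2).primeFactors).card
        ≤ (Finset.univ : Finset (Fin t)).offDiag.card * K := by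
      rw [← smul_eq_mul]
      exact Finset.sum_le_card_nsmul _ _ K (fun ij hij =>
        hK ij.1 ij.2 (Finset.mem_offDiag.mp hij).2.2)
    have h3 : (Finset.univ : Finset (Fin t)).offDiag.card ≤ t * t := by
      rw [Finset.offDiag_card]
      simp only [Finset.card_univ, Fintype.card_fin]
      omega
    calc ∑ i, (b i).primeFactors.card
        ≤ P.card + ∑ ij ∈ (Finset.univ : Finset (Fin t)).offDiag,
            ((b ij.1).primeFactors ∩ (b ij.2).primeFactors).card := h1
      _ ≤ P.card + (Finset.univ : Finset (Fin t)).offDiag.card * K :=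
          Nat.add_le_add_left h2 _
      _ ≤ P.card + t * t * K :=
          Nat.add_le_add_left (Nat.mul_le_mul_right K h3) _
  -- real bounds
  have hPr : (P.card : ℝ) ≤ 7 * J / L := aux_cheby hJ
  have hKr : (K:ℝ) ≤ 1.5 * L := by
    have h1 : (2:ℕ) ^ K ≤ J := Nat.pow_log_le_self 2 (by omega)
    have h2 : ((2:ℝ)) ^ K ≤ (J:ℝ) := by exact_mod_cast h1
    have h3 : (K:ℝ) * Real.log 2 ≤ L := by
      have := Real.log_le_log (by positivity) h2
      rwa [Real.log_pow] at this
    nlinarith [Real.log_two_gt_d9, Nat.cast_nonneg (α := ℝ) K, hL0]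
  have ht2 : (t:ℝ) * t ≤ (J:ℝ) / L ^ 2 := by
    have hsq : (J:ℝ) ^ ((1:ℝ)/2) = Real.sqrt J := (Real.sqrt_eq_rpow _).symm
    rw [hsq] at htle
    have hmul : Real.sqrt J * Real.sqrt J = (J:ℝ) := Real.mul_self_sqrt hJ0.le
    have h1 : (t:ℝ) * L ≤ Real.sqrt J := (le_div_iff₀ hL0).mp htle
    rw [le_div_iff₀ (by positivity)]
    nlinarith [mul_le_mul h1 h1 (by positivity) (Real.sqrt_nonneg (J:ℝ)), hmul]
  have hSr : ∑ i, ((b i).primeFactors.card : ℝ) ≤ 9 * J / L := by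
    have h1 : ((∑ i, (b i).primeFactors.card : ℕ) : ℝ)
        ≤ (P.card:ℝ) + (t:ℝ) * t * (K:ℝ) := by
      calc ((∑ i, (b i).primeFactors.card : ℕ) : ℝ)
          ≤ ((P.card + t * t * K : ℕ) : ℝ) := by exact_mod_cast hsumN
        _ = (P.card:ℝ) + (t:ℝ) * t * (K:ℝ) := by push_cast; ring
    have h2 : (t:ℝ) * t * (K:ℝ) ≤ ((J:ℝ) / L ^ 2) * (1.5 * L) :=
      mul_le_mul ht2 hKr (by positivity) (by positivity)
    have h3 : ((J:ℝ) / L ^ 2) * (1.5 * L) = 1.5 * J / L := by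
      field_simp
    have h4 : ∑ i, ((b i).primeFactors.card : ℝ)
        = ((∑ i, (b i).primeFactors.card : ℕ) : ℝ) := by push_cast; rfl
    rw [h4]
    calc ((∑ i, (b i).primeFactors.card : ℕ) : ℝ)
        ≤ (P.card:ℝ) + (t:ℝ) * t * (K:ℝ) := h1
      _ ≤ 7 * J / L + 1.5 * J / L := by rw [← h3] at *; linarith [hPr, h2]
      _ ≤ 9 * J / L := by
          rw [← add_div, div_le_div_iff_of_pos_right hL0]
          nlinarith [hJ0, hL0]
  -- Markov
  set X : ℝ := 100 * (J:ℝ) / ((t:ℝ) * L) with hXdef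
  have hXpos : 0 < X := by
    rw [hXdef]; positivity
  set B := Finset.univ.filter (fun i => X < ((b i).primeFactors.card : ℝ)) with hBdef
  set G := Finset.univ.filter (fun i => ¬ X < ((b i).primeFactors.card : ℝ)) with hGdef
  have hBX : (B.card : ℝ) * X ≤ ∑ i, ((b i).primeFactors.card : ℝ) := by
    have h1 : B.card • X ≤ ∑ i ∈ B, ((b i).primeFactors.card : ℝ) :=
      Finset.card_nsmul_le_sum B _ X (fun i hi => (Finset.mem_filter.mp hi).2.le)
    have h2 : ∑ i ∈ B, ((b i).primeFactors.card : ℝ)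
        ≤ ∑ i, ((b i).primeFactors.card : ℝ) :=
      Finset.sum_le_sum_of_subset_of_nonneg (Finset.subset_univ B)
        (fun i _ _ => by positivity)
    calc (B.card : ℝ) * X = B.card • X := (nsmul_eq_mul _ _).symm
      _ ≤ _ := h1.trans h2
  have hBcard : (B.card : ℝ) ≤ 9 * t / 100 := by
    have h1 : (B.card : ℝ) ≤ (9 * J / L) / X :=
      (le_div_iff₀ hXpos).mpr (hBX.trans hSr)
    have h2 : (9 * (J:ℝ) / L) / X = 9 * t / 100 := by
      rw [hXdef]
      field_simp
    rwa [h2] at h1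
  have hGB : B.card + G.card = t := by
    rw [hBdef, hGdef, Finset.card_filter_add_card_filter_not]
    simp
  have hG3 : 3 ≤ G.card := by
    have h1 : (B.card:ℝ) + (G.card:ℝ) = t := by exact_mod_cast hGB
    have h2 : (100:ℝ) ≤ t := by exact_mod_cast ht100
    have h3 : (3:ℝ) ≤ (G.card:ℝ) := by nlinarith [hBcard]
    exact_mod_cast h3
  have hGbound : ∀ m ∈ G, ((b m).primeFactors.card : ℝ) ≤ 100 * J / (t * L) := by
    intro m hm
    have := (Finset.mem_filter.mp hm).2
    rw [hXdef] at this
    exact not_lt.mp this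
  obtain ⟨i, hi⟩ := Finset.card_pos.mp (by omega : 0 < G.card)
  have h2c : 0 < (G.erase i).card := by
    rw [Finset.card_erase_of_mem hi]; omega
  obtain ⟨j, hj⟩ := Finset.card_pos.mp h2c
  have h3c : 0 < ((G.erase i).erase j).card := by
    rw [Finset.card_erase_of_mem hj, Finset.card_erase_of_mem hi]; omega
  obtain ⟨k, hk⟩ := Finset.card_pos.mp h3c
  have hjG : j ∈ G := Finset.mem_of_mem_erase hj
  have hji : j ≠ i := Finset.ne_of_mem_erase hj
  have hkj : k ≠ j := Finset.ne_of_mem_erase hk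
  have hk' : k ∈ G.erase i := Finset.mem_of_mem_erase hk
  have hki : k ≠ i := Finset.ne_of_mem_erase hk'
  have hkG : k ∈ G := Finset.mem_of_mem_erase hk'
  exact ⟨i, j, k, hji.symm, hki.symm, hkj.symm,
    hGbound i hi, hGbound j hjG, hGbound k hkG⟩
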